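/- Let Q be a free abelian group and U a subgroup of Q such that Q/U is free abelian. Then the sequence 0 → Λ²(Q)/Λ²(U) → (Q/U) ⊗_ℤ Q → SP²(Q/U) → 0 is exact, where the first map is induced by x∧y ↦ (x+U)⊗y − (y+U)⊗x (which annihilates the image of Λ²(U)), and the second map sends (x+U)⊗y to the product (x+U)·(y+U) in the symmetric square SP²(Q/U). -/

import Mathlib

open TensorProduct

/-- The relations defining the exterior square of an abelian group `A`:
the span of the elements `a ⊗ a`. -/
noncomputable def lam2Rel (A : Type) [AddCommGroup A] [Module ℤ A] :
    Submodule ℤ (A ⊗[ℤ] A) :=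
  Submodule.span ℤ {x | ∃ a : A, x = a ⊗ₜ[ℤ] a}

/-- The exterior square `Λ²(A)` of an abelian group `A`. -/
abbrev Lam2 (A : Type) [AddCommGroup A] [Module ℤ A] := (A ⊗[ℤ] A) ⧸ lam2Rel A

/-- The relations defining the symmetric square of an abelian group `A`:
the span of the elements `a ⊗ b - b ⊗ a`. -/
noncomputable def sp2Rel (A : Type) [AddCommGroup A] [Module ℤ A] :
    Submodule ℤ (A ⊗[ℤ] A) :=
  Submodule.span ℤ {x | ∃ a b : A, x = a ⊗ₜ[ℤ] b - b ⊗ₜ[ℤ] a}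

/-- The symmetric square `SP²(A)` of an abelian group `A`. -/
abbrev SP2 (A : Type) [AddCommGroup A] [Module ℤ A] := (A ⊗[ℤ] A) ⧸ sp2Rel A

/-- For a subgroup `U` of `Q`, the image `Λ²(U)` of the natural map `Λ²(U) → Λ²(Q)`. -/
noncomputable def lam2Im {Q : Type} [AddCommGroup Q] [Module ℤ Q] (U : Submodule ℤ Q) :
    Submodule ℤ (Lam2 Q) :=
  Submodule.map (lam2Rel Q).mkQ
    (Submodule.span ℤ {x | ∃ u ∈ U, ∃ v ∈ U, x = u ⊗ₜ[ℤ] v})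

section Aux

variable {Q : Type} [AddCommGroup Q] [Module ℤ Q] (U : Submodule ℤ Q)

/-- The class map `Q ⊗ Q → Λ²(Q)/Λ²(U)`. -/
noncomputable def cls : Q ⊗[ℤ] Q →ₗ[ℤ] (Lam2 Q ⧸ lam2Im U) :=
  (lam2Im U).mkQ ∘ₗ (lam2Rel Q).mkQ

lemma cls_apply (w : Q ⊗[ℤ] Q) :
    cls U w = Submodule.Quotient.mk (Submodule.Quotient.mk w) := rfl

lemma cls_diag (x : Q) : cls U (x ⊗ₜ[ℤ] x) = 0 := by
  rw [cls_apply]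
  have : (Submodule.Quotient.mk (x ⊗ₜ[ℤ] x) : Lam2 Q) = 0 := by
    rw [Submodule.Quotient.mk_eq_zero]
    exact Submodule.subset_span ⟨x, rfl⟩
  rw [this, Submodule.Quotient.mk_eq_zero]
  exact Submodule.zero_mem _
lemma cls_antisym (x y : Q) : cls U (y ⊗ₜ[ℤ] x) = - cls U (x ⊗ₜ[ℤ] y) := by
  have h : cls U ((x + y) ⊗ₜ[ℤ] (x + y)) = 0 := cls_diag U _
  rw [tmul_add, add_tmul, add_tmul, map_add, map_add, map_add, cls_diag, cls_diag,
    zero_add, add_zero] at h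
  rw [eq_neg_iff_add_eq_zero]
  exact h
lemma cls_uv {u v : Q} (hu : u ∈ U) (hv : v ∈ U) : cls U (u ⊗ₜ[ℤ] v) = 0 := by
  rw [cls_apply, Submodule.Quotient.mk_eq_zero]
  exact Submodule.mem_map_of_mem (Submodule.subset_span ⟨u, hu, v, hv, rfl⟩)

end Aux

section Aux2

variable {Q : Type} [AddCommGroup Q] [Module ℤ Q] (U : Submodule ℤ Q)
  (π : Q →ₗ[ℤ] Q ⧸ U) (s : (Q ⧸ U) →ₗ[ℤ] Q)
  (ρ : (Q ⧸ U) →ₗ[ℤ] (Q ⧸ U) →ₗ[ℤ] (Lam2 Q ⧸ lam2Im U))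

lemma cls_key (x y a c : Q) (hu : x - a ∈ U) (hv : y - c ∈ U) :
    cls U (a ⊗ₜ[ℤ] (y - c)) - cls U (c ⊗ₜ[ℤ] (x - a)) + cls U (a ⊗ₜ[ℤ] c)
      = cls U (x ⊗ₜ[ℤ] y) := by
  have h1 : cls U ((x - a) ⊗ₜ[ℤ] (y - c)) = 0 := cls_uv U hu hv
  have h2 : cls U (c ⊗ₜ[ℤ] (x - a)) = - cls U ((x - a) ⊗ₜ[ℤ] c) := cls_antisym U _ _
  simp only [tmul_sub, sub_tmul, map_sub, map_add, neg_sub] at h1 h2 ⊢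
  linear_combination (norm := abel) -h1 - h2

/-- The additive map `q ↦ cls U (s b ⊗ (q - s (π q))) + ρ b (π q)`. -/
noncomputable def r0Add (b : Q ⧸ U) : Q →+ (Lam2 Q ⧸ lam2Im U) where
  toFun q := cls U ((s b) ⊗ₜ[ℤ] (q - s (π q))) + ρ b (π q)
  map_zero' := by simp
  map_add' x y := by
    show cls U ((s b) ⊗ₜ[ℤ] (x + y - s (π (x + y)))) + ρ b (π (x + y)) =
      (cls U ((s b) ⊗ₜ[ℤ] (x - s (π x))) + ρ b (π x)) +
        (cls U ((s b) ⊗ₜ[ℤ] (y - s (π y))) + ρ b (π y))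
    have h : x + y - s (π (x + y)) = (x - s (π x)) + (y - s (π y)) := by
      rw [map_add, map_add]; abel
    rw [h, tmul_add, map_add, map_add, map_add]
    abel

noncomputable def r0Lin (b : Q ⧸ U) : Q →ₗ[ℤ] (Lam2 Q ⧸ lam2Im U) where
  toFun := r0Add U π s ρ b
  map_add' := (r0Add U π s ρ b).map_add
  map_smul' n x := by
    have h := map_intCast_smul (r0Add U π s ρ b) ℤ ℤ n x
    simp only [Int.cast_id] at h
    exact h

noncomputable def r0AddB : (Q ⧸ U) →+ (Q →ₗ[ℤ] (Lam2 Q ⧸ lam2Im U)) where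
  toFun := r0Lin U π s ρ
  map_zero' := by
    ext q
    show cls U ((s 0) ⊗ₜ[ℤ] (q - s (π q))) + ρ 0 (π q) = 0
    rw [map_zero, zero_tmul, map_zero, map_zero, LinearMap.zero_apply, add_zero]
  map_add' b b' := by
    ext q
    show cls U ((s (b + b')) ⊗ₜ[ℤ] (q - s (π q))) + ρ (b + b') (π q) =
      (cls U ((s b) ⊗ₜ[ℤ] (q - s (π q))) + ρ b (π q)) +
        (cls U ((s b') ⊗ₜ[ℤ] (q - s (π q))) + ρ b' (π q))
    rw [map_add, add_tmul, map_add, map_add, LinearMap.add_apply]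
    abel

noncomputable def r0 : (Q ⧸ U) →ₗ[ℤ] Q →ₗ[ℤ] (Lam2 Q ⧸ lam2Im U) where
  toFun := r0Lin U π s ρ
  map_add' := (r0AddB U π s ρ).map_add
  map_smul' n b := by
    have h := map_intCast_smul (r0AddB U π s ρ) ℤ ℤ n b
    simp only [Int.cast_id] at h
    exact h

noncomputable def retr : (Q ⧸ U) ⊗[ℤ] Q →ₗ[ℤ] (Lam2 Q ⧸ lam2Im U) :=
  TensorProduct.lift (r0 U π s ρ)

lemma retr_tmul (b : Q ⧸ U) (q : Q) :
    retr U π s ρ (b ⊗ₜ[ℤ] q) = cls U ((s b) ⊗ₜ[ℤ] (q - s (π q))) + ρ b (π q) := by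
  rw [retr]; exact TensorProduct.lift.tmul b q

/-- The additive map `c ↦ cls U (s a ⊗ s c)`. -/
noncomputable def e0Add (a : Q ⧸ U) : (Q ⧸ U) →+ (Lam2 Q ⧸ lam2Im U) where
  toFun c := cls U ((s a) ⊗ₜ[ℤ] (s c))
  map_zero' := by
    show cls U ((s a) ⊗ₜ[ℤ] (s 0)) = 0
    rw [map_zero, tmul_zero, map_zero]
  map_add' c c' := by
    show cls U ((s a) ⊗ₜ[ℤ] (s (c + c'))) =
      cls U ((s a) ⊗ₜ[ℤ] (s c)) + cls U ((s a) ⊗ₜ[ℤ] (s c'))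
    rw [map_add, tmul_add, map_add]

noncomputable def e0Lin (a : Q ⧸ U) : (Q ⧸ U) →ₗ[ℤ] (Lam2 Q ⧸ lam2Im U) where
  toFun := e0Add U s a
  map_add' := (e0Add U s a).map_add
  map_smul' n x := by
    have h := map_intCast_smul (e0Add U s a) ℤ ℤ n x
    simp only [Int.cast_id] at h
    exact h

noncomputable def e0AddB : (Q ⧸ U) →+ ((Q ⧸ U) →ₗ[ℤ] (Lam2 Q ⧸ lam2Im U)) where
  toFun := e0Lin U s
  map_zero' := by
    ext c
    show cls U ((s 0) ⊗ₜ[ℤ] (s c)) = 0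
    rw [map_zero, zero_tmul, map_zero]
  map_add' a a' := by
    ext c
    show cls U ((s (a + a')) ⊗ₜ[ℤ] (s c)) =
      cls U ((s a) ⊗ₜ[ℤ] (s c)) + cls U ((s a') ⊗ₜ[ℤ] (s c))
    rw [map_add, add_tmul, map_add]

noncomputable def e0 : (Q ⧸ U) →ₗ[ℤ] (Q ⧸ U) →ₗ[ℤ] (Lam2 Q ⧸ lam2Im U) where
  toFun := e0Lin U s
  map_add' := (e0AddB U s).map_add
  map_smul' n a := by
    have h := map_intCast_smul (e0AddB U s) ℤ ℤ n a
    simp only [Int.cast_id] at h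
    exact h

lemma e0_apply (a c : Q ⧸ U) : e0 U s a c = cls U ((s a) ⊗ₜ[ℤ] (s c)) := rfl

end Aux2

set_option maxHeartbeats 1000000 in
theorem stmt8 (Q : Type) [AddCommGroup Q] [Module ℤ Q] [Module.Free ℤ Q]
    (U : Submodule ℤ Q) [Module.Free ℤ (Q ⧸ U)]
    (f : (Lam2 Q ⧸ lam2Im U) →ₗ[ℤ] (Q ⧸ U) ⊗[ℤ] Q)
    (g : (Q ⧸ U) ⊗[ℤ] Q →ₗ[ℤ] SP2 (Q ⧸ U))
    (hf : ∀ x y : Q,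
      f (Submodule.Quotient.mk (Submodule.Quotient.mk (x ⊗ₜ[ℤ] y))) =
        (Submodule.Quotient.mk x : Q ⧸ U) ⊗ₜ[ℤ] y -
          (Submodule.Quotient.mk y : Q ⧸ U) ⊗ₜ[ℤ] x)
    (hg : ∀ (x : Q ⧸ U) (y : Q),
      g (x ⊗ₜ[ℤ] y) = Submodule.Quotient.mk (x ⊗ₜ[ℤ] (Submodule.Quotient.mk y : Q ⧸ U))) :
    Function.Injective f ∧ Function.Surjective g ∧ LinearMap.ker g = LinearMap.range f := by
  classical
  -- the projection, with ambient instances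
  set mkHom : Q →+ Q ⧸ U :=
    { toFun := fun q => Submodule.Quotient.mk q
      map_zero' := rfl
      map_add' := fun x y => by exact map_add U.mkQ x y } with hmkHom
  set π : Q →ₗ[ℤ] Q ⧸ U :=
    { toFun := fun q => Submodule.Quotient.mk q
      map_add' := fun x y => by exact map_add U.mkQ x y
      map_smul' := fun n x => by
        have h := map_intCast_smul U.mkQ ℤ ℤ n x; simp only [Int.cast_id] at h; exact h } with hπdef
  have hπsurj : Function.Surjective π := Submodule.Quotient.mk_surjective U
  set ιUHom : U →+ Q :=
    { toFun := fun u => (u : Q)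
      map_zero' := rfl
      map_add' := fun x y => rfl } with hιUHom
  set ιU : U →ₗ[ℤ] Q :=
    { toFun := fun u => (u : Q)
      map_add' := fun x y => rfl
      map_smul' := fun n x => by simpa [hιUHom] using map_intCast_smul ιUHom ℤ ℤ n x } with hιUdef
  -- splitting of the quotient map
  obtain ⟨s, hs⟩ := Module.projective_lifting_property π LinearMap.id hπsurj
  have hsπ : ∀ b : Q ⧸ U, π (s b) = b := fun b => LinearMap.congr_fun hs b
  have hfc : ∀ x y : Q, f (cls U (x ⊗ₜ[ℤ] y)) =
      (π x) ⊗ₜ[ℤ] y - (π y) ⊗ₜ[ℤ] x := by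
    intro x y; rw [cls_apply]; exact hf x y
  -- a linear order on the basis index
  letI : LinearOrder (Module.Free.ChooseBasisIndex ℤ (Q ⧸ U)) :=
    IsWellOrder.linearOrder WellOrderingRel
  set bB := Module.Free.chooseBasis ℤ (Q ⧸ U) with hbB
  -- the bilinear map ρ
  set ρ : (Q ⧸ U) →ₗ[ℤ] (Q ⧸ U) →ₗ[ℤ] (Lam2 Q ⧸ lam2Im U) :=
    bB.constr ℤ (fun i => bB.constr ℤ
      (fun j => if i < j then cls U ((s (bB i)) ⊗ₜ[ℤ] (s (bB j))) else 0)) with hρdef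
  have hDE : ρ - ρ.flip = e0 U s := by
    apply bB.ext; intro i; apply bB.ext; intro j
    simp only [LinearMap.sub_apply, LinearMap.flip_apply, hρdef,
      Module.Basis.constr_basis, e0_apply]
    rcases lt_trichotomy i j with h | h | h
    · rw [if_pos h, if_neg (not_lt_of_gt h), sub_zero]
    · subst h; rw [if_neg (lt_irrefl i), sub_zero, eq_comm]; exact cls_diag U _
    · rw [if_neg (not_lt_of_gt h), if_pos h, zero_sub,
        cls_antisym U (s (bB i)) (s (bB j)), neg_neg]
  have hρ : ∀ a c : Q ⧸ U, ρ a c - ρ c a = cls U ((s a) ⊗ₜ[ℤ] (s c)) := by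
    intro a c
    have h1 := LinearMap.congr_fun (LinearMap.congr_fun hDE a) c
    simpa only [LinearMap.sub_apply, LinearMap.flip_apply, e0_apply] using h1
  -- the retraction r
  set r := retr U π s ρ with hrdef
  have hclssurj : Function.Surjective (cls U) :=
    (Submodule.mkQ_surjective _).comp (Submodule.mkQ_surjective _)
  -- r ∘ f = id
  have hrf : ∀ z, r (f z) = z := by
    have hrfw : ∀ w : Q ⊗[ℤ] Q, r (f (cls U w)) = cls U w := by
      intro w
      induction w using TensorProduct.induction_on with
      | zero => rw [map_zero, map_zero, map_zero]
      | tmul x y =>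
        rw [hfc, map_sub, hrdef, retr_tmul, retr_tmul]
        have hu : x - s (π x) ∈ U := by
          rw [← Submodule.Quotient.mk_eq_zero U]
          show π (x - s (π x)) = 0
          rw [map_sub, hsπ, sub_self]
        have hv : y - s (π y) ∈ U := by
          rw [← Submodule.Quotient.mk_eq_zero U]
          show π (y - s (π y)) = 0
          rw [map_sub, hsπ, sub_self]
        have hkey := cls_key U x y (s (π x)) (s (π y)) hu hv
        have hρxy := hρ (π x) (π y)
        linear_combination (norm := abel) hkey + hρxy
      | add w₁ w₂ h₁ h₂ => rw [map_add, map_add, map_add, h₁, h₂]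
    intro z
    obtain ⟨w, rfl⟩ := hclssurj z
    exact hrfw w
  have hinj : Function.Injective f := fun a b h => by rw [← hrf a, ← hrf b, h]
  -- surjectivity of g
  have hsurj : Function.Surjective g := by
    intro y
    obtain ⟨w, rfl⟩ := Submodule.Quotient.mk_surjective (sp2Rel (Q ⧸ U)) y
    induction w using TensorProduct.induction_on with
    | zero => exact ⟨0, by simp⟩
    | tmul b b' =>
      obtain ⟨q, rfl⟩ := hπsurj b'
      exact ⟨b ⊗ₜ[ℤ] q, by rw [hg]; rfl⟩
    | add w₁ w₂ h₁ h₂ =>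
      obtain ⟨z₁, hz₁⟩ := h₁
      obtain ⟨z₂, hz₂⟩ := h₂
      refine ⟨z₁ + z₂, ?_⟩
      rw [map_add, hz₁, hz₂, ← Submodule.Quotient.mk_add]
  -- range f ≤ ker g
  have hgf : ∀ z, g (f z) = 0 := by
    have hgfw : ∀ w : Q ⊗[ℤ] Q, g (f (cls U w)) = 0 := by
      intro w
      induction w using TensorProduct.induction_on with
      | zero => rw [map_zero, map_zero, map_zero]
      | tmul x y =>
        rw [hfc, map_sub, hg, hg, ← Submodule.Quotient.mk_sub,
          Submodule.Quotient.mk_eq_zero]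
        exact Submodule.subset_span ⟨π x, π y, rfl⟩
      | add w₁ w₂ h₁ h₂ => rw [map_add, map_add, map_add, h₁, h₂, add_zero]
    intro z
    obtain ⟨w, rfl⟩ := hclssurj z
    exact hgfw w
  -- g in terms of lTensor
  have hgN : ∀ z : (Q ⧸ U) ⊗[ℤ] Q,
      g z = Submodule.Quotient.mk (LinearMap.lTensor (Q ⧸ U) π z) := by
    intro z
    induction z using TensorProduct.induction_on with
    | zero => rw [map_zero, map_zero]; rfl
    | tmul b q => rw [hg, LinearMap.lTensor_tmul]; rfl
    | add x y hx hy =>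
      rw [map_add, hx, hy, map_add, ← Submodule.Quotient.mk_add]
  have hker : LinearMap.ker g = LinearMap.range f := by
    apply le_antisymm
    · -- ker g ≤ range f
      intro z hz
      rw [LinearMap.mem_ker, hgN, Submodule.Quotient.mk_eq_zero] at hz
      have hsp : ∀ w ∈ sp2Rel (Q ⧸ U), ∃ z₀ ∈ LinearMap.range f,
          LinearMap.lTensor (Q ⧸ U) π z₀ = w := by
        intro w hw
        induction hw using Submodule.span_induction with
        | mem x hx =>
          obtain ⟨a, c, rfl⟩ := hx
          refine ⟨f (cls U ((s a) ⊗ₜ[ℤ] (s c))), ⟨_, rfl⟩, ?_⟩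
          rw [hfc, map_sub, hsπ, hsπ]
          rw [LinearMap.lTensor_tmul, LinearMap.lTensor_tmul, hsπ, hsπ]
        | zero => exact ⟨0, Submodule.zero_mem _, map_zero _⟩
        | add x y _ _ ihx ihy =>
          obtain ⟨z₁, hm₁, hz₁⟩ := ihx
          obtain ⟨z₂, hm₂, hz₂⟩ := ihy
          exact ⟨z₁ + z₂, Submodule.add_mem _ hm₁ hm₂, by rw [map_add, hz₁, hz₂]⟩
        | smul n x _ ih =>
          obtain ⟨z₀, hm, hz₀⟩ := ih
          refine ⟨n • z₀, Submodule.smul_mem _ n hm, ?_⟩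
          have h := map_intCast_smul
            (LinearMap.lTensor (Q ⧸ U) π).toAddMonoidHom ℤ ℤ n z₀
          simp only [Int.cast_id, LinearMap.toAddMonoidHom_coe] at h
          rw [h, hz₀]
      obtain ⟨z₀, hmem, hz₀⟩ := hsp _ hz
      have hexact0 : Function.Exact ιU π := by
        intro y
        constructor
        · intro h
          exact ⟨⟨y, (Submodule.Quotient.mk_eq_zero U).mp h⟩, rfl⟩
        · rintro ⟨⟨u, hu⟩, rfl⟩
          exact (Submodule.Quotient.mk_eq_zero U).mpr hu
      have hex : Function.Exact (LinearMap.lTensor (Q ⧸ U) ιU)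
          (LinearMap.lTensor (Q ⧸ U) π) := lTensor_exact (Q ⧸ U) hexact0 hπsurj
      have hker2 : LinearMap.lTensor (Q ⧸ U) π (z - z₀) = 0 := by
        rw [map_sub, hz₀, sub_self]
      obtain ⟨w, hw⟩ := (hex (z - z₀)).mp hker2
      have hUrange : ∀ w : (Q ⧸ U) ⊗[ℤ] U,
          LinearMap.lTensor (Q ⧸ U) ιU w ∈ LinearMap.range f := by
        intro w
        induction w using TensorProduct.induction_on with
        | zero => rw [map_zero]; exact Submodule.zero_mem _
        | tmul b u =>
          refine ⟨-(cls U ((u : Q) ⊗ₜ[ℤ] (s b))), ?_⟩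
          rw [map_neg, hfc, hsπ]
          have hu0 : π (u : Q) = 0 := by
            show (Submodule.Quotient.mk (u : Q) : Q ⧸ U) = 0
            rw [Submodule.Quotient.mk_eq_zero]; exact u.2
          rw [hu0, LinearMap.lTensor_tmul, zero_tmul, zero_sub, neg_neg]
          rfl
        | add w₁ w₂ h₁ h₂ =>
          rw [map_add]; exact Submodule.add_mem _ h₁ h₂
      have h1 : z - z₀ ∈ LinearMap.range f := by rw [← hw]; exact hUrange w
      have h3 := Submodule.add_mem _ h1 hmem
      rwa [sub_add_cancel] at h3
    · rintro _ ⟨z, rfl⟩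
      rw [LinearMap.mem_ker]
      exact hgf z
  exact ⟨hinj, hsurj, hker⟩
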